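/- Define f_{m,k}(q) by (1-q)/((zq;q)_k (q/z;q)_k) = ∑_{m∈ℤ} z^m f_{m,k}(q). Then for every k ≥ 2 and every integer m with |m| ≥ 2, all coefficients of f_{m,k}(q) are nonnegative. -/

import Mathlib

/-- `akm k m n` is the coefficient of `z^m q^n` in
`1/((qz;q)_k (q/z;q)_k) = ∏_{i=1}^{k} 1/((1 - z q^i)(1 - q^i/z))`, where
`(x;q)_k = ∏_{i=0}^{k-1} (1 - x q^i)`: it counts pairs `(α, β)` of `k`-tuples of
nonnegative integers with `∑_{i=1}^k i(α_i + β_i) = n` and `∑ α_i - ∑ β_i = m`. -/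
def akm (k : ℕ) (m : ℤ) (n : ℕ) : ℕ :=
  (Finset.univ.filter
    (fun p : (Fin k → Fin (n + 1)) × (Fin k → Fin (n + 1)) =>
      (∑ i : Fin k, (i.1 + 1) * (((p.1 i : ℕ)) + (p.2 i : ℕ)) = n) ∧
      ((∑ i : Fin k, ((p.1 i : ℕ) : ℤ)) - ∑ i : Fin k, ((p.2 i : ℕ) : ℤ)) = m)).card

/-- `fmk k m n` is the coefficient of `q^n` in `f_{m,k}(q)`, which is defined by
`(1-q)/((zq;q)_k (q/z;q)_k) = ∑_{m ∈ ℤ} z^m f_{m,k}(q)`; thus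
`fmk k m n = a_{k,m}(n) - a_{k,m}(n-1)`. -/
def fmk (k : ℕ) (m : ℤ) (n : ℕ) : ℤ :=
  (akm k m n : ℤ) - (if n = 0 then 0 else (akm k m (n - 1) : ℤ))

/-- The coefficient of `q^n` in `q^s/((1-q^a)(1-q^b)) = ∑_{i,j≥0} q^{s+ai+bj}`. -/
def geomCoeff (s a b n : ℕ) : ℤ :=
  if s ≤ n then
    (((Finset.range (n + 1) ×ˢ Finset.range (n + 1)).filter
      (fun p => a * p.1 + b * p.2 = n - s)).card : ℤ)
  else 0


def bnd (k N : ℕ) : Finset (Multiset ℕ) := ((N • (Finset.Icc 1 k).val).powerset).toFinset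

def cset (k : ℕ) (P : Finset ℕ) (m n : ℤ) : Finset (Multiset ℕ × Multiset ℕ) :=
  ((bnd k n.toNat) ×ˢ (bnd k n.toNat)).filter
    (fun p => (∀ x ∈ p.1, x ∈ P) ∧ (∀ x ∈ p.2, x ∈ Finset.Icc 1 k) ∧
      ((p.1.sum + p.2.sum : ℕ) : ℤ) = n ∧ (p.1.card : ℤ) - (p.2.card : ℤ) = m)

def cnt (k : ℕ) (P : Finset ℕ) (m n : ℤ) : ℕ := (cset k P m n).card

lemma count_mul_le_sum (s : Multiset ℕ) (a : ℕ) : s.count a * a ≤ s.sum := by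
  induction s using Multiset.induction with
  | empty => simp
  | cons b t ih =>
    rw [Multiset.sum_cons, Multiset.count_cons]
    by_cases h : a = b
    · subst h
      simp only [if_pos trivial]
      have : (Multiset.count a t + 1) * a = Multiset.count a t * a + a := by ring
      omega
    · simp only [if_neg h, add_zero]
      have : Multiset.count a t * a ≤ t.sum := ih
      omega

lemma mem_bnd {k N : ℕ} {s : Multiset ℕ} (h1 : ∀ x ∈ s, x ∈ Finset.Icc 1 k)
    (h2 : s.sum ≤ N) : s ∈ bnd k N := by
  rw [bnd, Multiset.mem_toFinset, Multiset.mem_powerset, Multiset.le_iff_count]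
  intro a
  rw [Multiset.count_nsmul]
  by_cases ha : a ∈ Finset.Icc 1 k
  · have h3 : (Finset.Icc 1 k).val.count a = 1 :=
      Multiset.count_eq_one_of_mem (Finset.Icc 1 k).nodup (Finset.mem_val.mpr ha)
    rw [h3, mul_one]
    by_cases hs : a ∈ s
    · have h4 : 1 ≤ a := (Finset.mem_Icc.mp (h1 a hs)).1
      have h5 := count_mul_le_sum s a
      nlinarith
    · simp [Multiset.count_eq_zero_of_notMem hs]
  · have : a ∉ s := fun hs => ha (h1 a hs)
    simp [Multiset.count_eq_zero_of_notMem this]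

lemma mem_cset {k : ℕ} {P : Finset ℕ} {m n : ℤ} (hPk : P ⊆ Finset.Icc 1 k)
    {x : Multiset ℕ × Multiset ℕ} :
    x ∈ cset k P m n ↔ (∀ a ∈ x.1, a ∈ P) ∧ (∀ a ∈ x.2, a ∈ Finset.Icc 1 k) ∧
      ((x.1.sum + x.2.sum : ℕ) : ℤ) = n ∧ (x.1.card : ℤ) - (x.2.card : ℤ) = m := by
  constructor
  · intro h
    exact (Finset.mem_filter.mp h).2
  · rintro ⟨h1, h2, h3, h4⟩
    refine Finset.mem_filter.mpr ⟨Finset.mem_product.mpr ⟨?_, ?_⟩, h1, h2, h3, h4⟩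
    · exact mem_bnd (fun a ha => hPk (h1 a ha)) (by omega)
    · exact mem_bnd h2 (by omega)

lemma cnt_eq_zero {k : ℕ} {P : Finset ℕ} {m n : ℤ} (hn : n < 0) : cnt k P m n = 0 := by
  rw [cnt, cset, Finset.card_eq_zero, Finset.filter_eq_empty_iff]
  rintro p - ⟨-, -, hsum, -⟩
  omega

lemma cnt_empty_eq_zero {k : ℕ} {m n : ℤ} (hm : 0 < m) : cnt k ∅ m n = 0 := by
  rw [cnt, cset, Finset.card_eq_zero, Finset.filter_eq_empty_iff]
  rintro p - ⟨h1, -, -, hdiff⟩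
  have : p.1 = 0 := Multiset.eq_zero_of_forall_notMem (fun x hx => by simpa using h1 x hx)
  rw [this] at hdiff
  simp at hdiff
  omega

lemma strip_one {k : ℕ} {P : Finset ℕ} {m n : ℤ} {p : ℕ} (hp : p ∈ P) (hp1 : 1 ≤ p)
    (hPk : P ⊆ Finset.Icc 1 k) :
    cnt k P m n = cnt k (P.erase p) m n + cnt k P (m - 1) (n - p) := by
  classical
  have hsplit := Finset.card_filter_add_card_filter_not
    (s := cset k P m n) (p := fun x => p ∈ x.1)
  have hne : ((cset k P m n).filter (fun x => ¬ p ∈ x.1)) = cset k (P.erase p) m n := by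
    apply Finset.ext
    intro x
    rw [Finset.mem_filter, mem_cset hPk, mem_cset (Finset.Subset.trans (Finset.erase_subset _ _) hPk)]
    constructor
    · rintro ⟨⟨h1, h2, h3, h4⟩, h5⟩
      exact ⟨fun a ha => Finset.mem_erase.mpr ⟨fun he => h5 (he ▸ ha), h1 a ha⟩, h2, h3, h4⟩
    · rintro ⟨h1, h2, h3, h4⟩
      exact ⟨⟨fun a ha => Finset.mem_of_mem_erase (h1 a ha), h2, h3, h4⟩,
        fun hcon => (Finset.mem_erase.mp (h1 p hcon)).1 rfl⟩
  have hye : ((cset k P m n).filter (fun x => p ∈ x.1)).card = cnt k P (m - 1) (n - p) := by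
    rw [cnt]
    apply Finset.card_nbij' (i := fun x => (x.1.erase p, x.2))
      (j := fun y => (p ::ₘ y.1, y.2))
    · -- maps into target
      intro x hx
      rw [Finset.mem_coe, Finset.mem_filter, mem_cset hPk] at hx
      obtain ⟨⟨h1, h2, h3, h4⟩, h5⟩ := hx
      have hcons : p ::ₘ x.1.erase p = x.1 := Multiset.cons_erase h5
      have hsum : x.1.sum = p + (x.1.erase p).sum := by
        conv_lhs => rw [← hcons]
        exact Multiset.sum_cons p _
      have hcard : x.1.card = (x.1.erase p).card + 1 := by
        conv_lhs => rw [← hcons]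
        exact Multiset.card_cons p _
      rw [Finset.mem_coe, mem_cset hPk]
      refine ⟨fun a ha => h1 a (Multiset.mem_of_mem_erase ha), h2, ?_, ?_⟩
      · rw [hsum] at h3
        simp only [Nat.cast_add] at h3 ⊢
        omega
      · rw [hcard] at h4
        simp only [Nat.cast_add] at h4 ⊢
        omega
    · -- j maps into source
      intro y hy
      rw [Finset.mem_coe, mem_cset hPk] at hy
      obtain ⟨h1, h2, h3, h4⟩ := hy
      rw [Finset.mem_coe, Finset.mem_filter, mem_cset hPk]
      have hsum : (p ::ₘ y.1).sum = p + y.1.sum := Multiset.sum_cons p _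
      have hcard : (p ::ₘ y.1).card = y.1.card + 1 := Multiset.card_cons p _
      refine ⟨⟨?_, h2, ?_, ?_⟩, Multiset.mem_cons_self p _⟩
      · intro a ha
        rcases Multiset.mem_cons.mp ha with h | h
        · exact h ▸ hp
        · exact h1 a h
      · rw [hsum]
        simp only [Nat.cast_add] at h3 ⊢
        omega
      · rw [hcard]
        simp only [Nat.cast_add] at h4 ⊢
        omega
    · intro y hy
      have h5 : p ∈ y.1 := (Finset.mem_filter.mp hy).2
      exact Prod.ext_iff.mpr ⟨Multiset.cons_erase h5, rfl⟩
    · intro x hx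
      exact Prod.ext_iff.mpr ⟨Multiset.erase_cons_head p x.1, rfl⟩
  rw [cnt] at hye
  rw [cnt, cnt, cnt, ← hsplit, hne, hye]
  omega

lemma strip_all {k : ℕ} {P : Finset ℕ} {p : ℕ} (hp : p ∈ P) (hp1 : 1 ≤ p)
    (hPk : P ⊆ Finset.Icc 1 k) :
    ∀ (B : ℕ) (m n : ℤ), n < p * B →
      cnt k P m n = ∑ c ∈ Finset.range B, cnt k (P.erase p) (m - c) (n - p * c) := by
  intro B
  induction B with
  | zero =>
    intro m n hn
    simp only [Finset.range_zero, Finset.sum_empty]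
    exact cnt_eq_zero (by simpa using hn)
  | succ B ih =>
    intro m n hn
    rw [strip_one hp hp1 hPk, Finset.sum_range_succ']
    have hrec := ih (m - 1) (n - p) (by
      have hx : (p : ℤ) * (B + 1) = p * B + p := by ring
      push_cast at hn ⊢
      omega)
    rw [hrec]
    simp only [Nat.cast_add, Nat.cast_one, Nat.cast_zero]
    have : ∀ c ∈ Finset.range B, cnt k (P.erase p) (m - 1 - c) (n - p - p * c)
        = cnt k (P.erase p) (m - (c + 1)) (n - p * (c + 1)) := by
      intro c _
      congr 1 <;> push_cast <;> ring
    rw [Finset.sum_congr rfl this]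
    have h0 : cnt k (P.erase p) (m - 0) (n - p * 0) = cnt k (P.erase p) m n := by
      norm_num
    rw [h0]
    ring

lemma add_mu_one {k : ℕ} {P : Finset ℕ} {m n : ℤ} {w : ℕ} (hw1 : 1 ≤ w) (hwk : w ≤ k)
    (hPk : P ⊆ Finset.Icc 1 k) :
    cnt k P m n ≤ cnt k P (m - 1) (n + w) := by
  apply Finset.card_le_card_of_injOn (f := fun x => (x.1, w ::ₘ x.2))
  · intro x hx
    rw [Finset.mem_coe, mem_cset hPk] at hx ⊢
    obtain ⟨h1, h2, h3, h4⟩ := hx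
    refine ⟨h1, ?_, ?_, ?_⟩
    · intro a ha
      rcases Multiset.mem_cons.mp ha with h | h
      · exact h ▸ Finset.mem_Icc.mpr ⟨hw1, hwk⟩
      · exact h2 a h
    · rw [Multiset.sum_cons]
      simp only [Nat.cast_add] at h3 ⊢
      omega
    · rw [Multiset.card_cons]
      simp only [Nat.cast_add] at h4 ⊢
      push_cast
      omega
  · intro x _ y _ hxy
    simp only [Prod.mk.injEq, Multiset.cons_inj_right] at hxy
    exact Prod.ext_iff.mpr hxy

lemma add_pair {k : ℕ} {P : Finset ℕ} {m n : ℤ} {w : ℕ} (h1P : 1 ∈ P) (hw1 : 1 ≤ w)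
    (hwk : w ≤ k) (hPk : P ⊆ Finset.Icc 1 k) :
    cnt k P m n ≤ cnt k P m (n + 1 + w) := by
  apply Finset.card_le_card_of_injOn (f := fun x => (1 ::ₘ x.1, w ::ₘ x.2))
  · intro x hx
    rw [Finset.mem_coe, mem_cset hPk] at hx ⊢
    obtain ⟨h1, h2, h3, h4⟩ := hx
    refine ⟨?_, ?_, ?_, ?_⟩
    · intro a ha
      rcases Multiset.mem_cons.mp ha with h | h
      · exact h ▸ h1P
      · exact h1 a h
    · intro a ha
      rcases Multiset.mem_cons.mp ha with h | h
      · exact h ▸ Finset.mem_Icc.mpr ⟨hw1, hwk⟩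
      · exact h2 a h
    · rw [Multiset.sum_cons, Multiset.sum_cons]
      simp only [Nat.cast_add] at h3 ⊢
      omega
    · rw [Multiset.card_cons, Multiset.card_cons]
      simp only [Nat.cast_add] at h4 ⊢
      push_cast
      omega
  · intro x _ y _ hxy
    simp only [Prod.mk.injEq, Multiset.cons_inj_right] at hxy
    exact Prod.ext_iff.mpr hxy

lemma add_step {k : ℕ} {P : Finset ℕ} (hk : 2 ≤ k) (h1P : 1 ∈ P)
    (hPk : P ⊆ Finset.Icc 1 k) :
    ∀ (s : ℕ), 2 ≤ s → ∀ (m n : ℤ), cnt k P m n ≤ cnt k P m (n + s) := by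
  intro s
  induction s using Nat.strong_induction_on with
  | _ s ih =>
    intro hs m n
    match s, hs with
    | 2, _ =>
      have := add_pair (m := m) (n := n) (w := 1) h1P le_rfl (by omega) hPk
      rw [show n + 1 + ((1:ℕ):ℤ) = n + ((2:ℕ):ℤ) by push_cast; ring] at this
      exact this
    | 3, _ =>
      have := add_pair (m := m) (n := n) (w := 2) h1P (by omega) hk hPk
      rw [show n + 1 + ((2:ℕ):ℤ) = n + ((3:ℕ):ℤ) by push_cast; ring] at this
      exact this
    | (s + 4), _ =>
      have h1 : cnt k P m n ≤ cnt k P m (n + 2) := by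
        have := add_pair (m := m) (n := n) (w := 1) h1P le_rfl (by omega) hPk
        rw [show n + 1 + ((1:ℕ):ℤ) = n + (2:ℤ) by push_cast; ring] at this
        exact this
      have h2 : cnt k P m (n + 2) ≤ cnt k P m ((n + 2) + (s + 2)) :=
        ih (s + 2) (by omega) (by omega) m (n + 2)
      calc cnt k P m n ≤ cnt k P m (n + 2) := h1
        _ ≤ cnt k P m ((n + 2) + (s + 2)) := h2
        _ = cnt k P m (n + (s + 4)) := by congr 1; push_cast; ring

lemma add_mu_many {k : ℕ} {P : Finset ℕ} (hPk : P ⊆ Finset.Icc 1 k) :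
    ∀ (t w : ℕ), t ≤ w → w ≤ t * k → ∀ (m n : ℤ),
      cnt k P m n ≤ cnt k P (m - t) (n + w) := by
  intro t
  induction t with
  | zero =>
    intro w h1 h2 m n
    have : w = 0 := by omega
    subst this
    simp
  | succ t ih =>
    intro w h1 h2 m n
    by_cases ht : t = 0
    · subst ht
      have := add_mu_one (m := m) (n := n) (w := w) (by omega) (by omega) hPk
      simpa using this
    · -- choose w₁ = min k (w - t), recurse with w - w₁
      set w₁ := min k (w - t) with hw₁
      have hk1 : 1 ≤ k := by
        rcases Nat.eq_zero_or_pos k with h | h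
        · subst h; omega
        · exact h
      have hw₁1 : 1 ≤ w₁ := by omega
      have hw₁k : w₁ ≤ k := min_le_left _ _
      have hrem1 : t ≤ w - w₁ := by omega
      have hrem2 : w - w₁ ≤ t * k := by
        rcases le_or_gt k (w - t) with h | h
        · have hw : w₁ = k := by omega
          have hx : (t + 1) * k = t * k + k := by ring
          omega
        · have : w₁ = w - t := by omega
          have : w - w₁ = t := by omega
          nlinarith
      have step1 := ih (w - w₁) hrem1 hrem2 m n
      have step2 := add_mu_one (m := m - t) (n := n + ((w - w₁ : ℕ) : ℤ)) (w := w₁) hw₁1 hw₁k hPk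
      calc cnt k P m n ≤ cnt k P (m - t) (n + ((w - w₁ : ℕ) : ℤ)) := step1
        _ ≤ cnt k P (m - t - 1) (n + ((w - w₁ : ℕ) : ℤ) + w₁) := step2
        _ = cnt k P (m - (t + 1)) (n + w) := by
            congr 1
            · push_cast; ring
            · push_cast; omega

lemma sum_helper {f g : ℕ → ℕ} {B B' : ℕ} (σ : ℕ → ℕ) (hσ : Function.Injective σ)
    (h : ∀ c ∈ Finset.range B, f c ≠ 0 → σ c ∈ Finset.range B' ∧ f c ≤ g (σ c)) :
    ∑ c ∈ Finset.range B, f c ≤ ∑ c ∈ Finset.range B', g c := by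
  classical
  rw [← Finset.sum_filter_ne_zero (Finset.range B)]
  set s := (Finset.range B).filter (fun c => f c ≠ 0) with hs
  have h1 : ∑ c ∈ s, f c ≤ ∑ c ∈ s, g (σ c) := by
    apply Finset.sum_le_sum
    intro c hc
    rw [hs, Finset.mem_filter] at hc
    exact (h c hc.1 hc.2).2
  have h2 : ∑ c ∈ s, g (σ c) = ∑ y ∈ s.image σ, g y :=
    (Finset.sum_image (fun x _ y _ hxy => hσ hxy)).symm
  have h3 : s.image σ ⊆ Finset.range B' := by
    intro y hy
    obtain ⟨c, hc, rfl⟩ := Finset.mem_image.mp hy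
    rw [hs, Finset.mem_filter] at hc
    exact (h c hc.1 hc.2).1
  calc ∑ c ∈ s, f c ≤ ∑ c ∈ s, g (σ c) := h1
    _ = ∑ y ∈ s.image σ, g y := h2
    _ ≤ ∑ c ∈ Finset.range B', g c := Finset.sum_le_sum_of_subset h3

lemma shift1 {k : ℕ} (hk : 2 ≤ k) {m N : ℤ} (hm : 1 ≤ m) :
    cnt k (Finset.Icc 1 1) m N = cnt k (Finset.Icc 1 1) (m - 1) (N - 1) := by
  have h1 : (1:ℕ) ∈ Finset.Icc 1 1 := by simp
  have hsub : Finset.Icc 1 1 ⊆ Finset.Icc 1 k := Finset.Icc_subset_Icc le_rfl (by omega)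
  have := strip_one (k := k) (m := m) (n := N) h1 le_rfl hsub
  have he : (Finset.Icc 1 1).erase 1 = ∅ := by
    ext x
    simp only [Finset.mem_erase, Finset.mem_Icc, Finset.notMem_empty, iff_false]
    omega
  rw [he] at this
  rw [this, cnt_empty_eq_zero (by omega)]
  simp

lemma cnt_congr {k : ℕ} {P : Finset ℕ} {m1 m2 n1 n2 : ℤ} (h1 : m1 = m2) (h2 : n1 = n2) :
    cnt k P m1 n1 = cnt k P m2 n2 := by rw [h1, h2]

lemma key {k : ℕ} (hk : 2 ≤ k) :
    ∀ a : ℕ, 2 ≤ a → a ≤ k → ∀ m n : ℤ, 2 ≤ m →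
      cnt k (Finset.Icc 1 a) m (n - 1) ≤ cnt k (Finset.Icc 1 a) m n := by
  intro a
  induction a using Nat.strong_induction_on with
  | _ a ih =>
    intro ha2 hak m n hm
    rcases le_or_gt n 0 with hn | hn
    · rw [cnt_eq_zero (by omega)]; exact Nat.zero_le _
    have hsubk : Finset.Icc 1 a ⊆ Finset.Icc 1 k := Finset.Icc_subset_Icc le_rfl hak
    have hmemA : a ∈ Finset.Icc 1 a := Finset.mem_Icc.mpr ⟨by omega, le_rfl⟩
    have hmemA1 : (a - 1) ∈ Finset.Icc 1 a := Finset.mem_Icc.mpr ⟨by omega, by omega⟩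
    have e1 := strip_one (k := k) (m := m) (n := n) hmemA (by omega) hsubk
    have e2 := strip_one (k := k) (m := m) (n := n - 1) hmemA1 (by omega) hsubk
    have er1 : (Finset.Icc 1 a).erase a = Finset.Icc 1 (a - 1) := by
      ext x; simp only [Finset.mem_erase, Finset.mem_Icc]; omega
    rw [er1] at e1
    have harg : n - 1 - ((a - 1 : ℕ) : ℤ) = n - a := by omega
    rw [harg] at e2
    suffices hineq : cnt k ((Finset.Icc 1 a).erase (a - 1)) m (n - 1)
        ≤ cnt k (Finset.Icc 1 (a - 1)) m n by omega
    set B := n.toNat + 1 with hBdef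
    have hBn : (B : ℤ) = n + 1 := by omega
    have hmemA' : a ∈ (Finset.Icc 1 a).erase (a - 1) :=
      Finset.mem_erase.mpr ⟨by omega, hmemA⟩
    have hsub' : (Finset.Icc 1 a).erase (a - 1) ⊆ Finset.Icc 1 k :=
      (Finset.erase_subset _ _).trans hsubk
    have hbound1 : n - 1 < (a : ℤ) * B := by
      have h1 : (2 : ℤ) * B ≤ (a : ℤ) * B :=
        mul_le_mul_of_nonneg_right (by exact_mod_cast ha2) (by positivity)
      omega
    have hbound2 : n < ((a - 1 : ℕ) : ℤ) * B := by
      have h1 : (1 : ℤ) * B ≤ ((a - 1 : ℕ) : ℤ) * B :=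
        mul_le_mul_of_nonneg_right (by omega) (by positivity)
      omega
    have hmemB : (a - 1) ∈ Finset.Icc 1 (a - 1) := Finset.mem_Icc.mpr ⟨by omega, le_rfl⟩
    have hsubB : Finset.Icc 1 (a - 1) ⊆ Finset.Icc 1 k :=
      Finset.Icc_subset_Icc le_rfl (by omega)
    have L := strip_all hmemA' (by omega) hsub' B m (n - 1) hbound1
    have R := strip_all hmemB (by omega) hsubB B m n hbound2
    have er2 : ((Finset.Icc 1 a).erase (a - 1)).erase a = Finset.Icc 1 (a - 2) := by
      ext x
      simp only [Finset.mem_erase, Finset.mem_Icc]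
      omega
    have er3 : (Finset.Icc 1 (a - 1)).erase (a - 1) = Finset.Icc 1 (a - 2) := by
      ext x
      simp only [Finset.mem_erase, Finset.mem_Icc]
      omega
    rw [er2] at L
    rw [er3] at R
    rw [L, R]
    have hsubI : Finset.Icc 1 (a - 2) ⊆ Finset.Icc 1 k :=
      Finset.Icc_subset_Icc le_rfl (by omega)
    rcases Nat.lt_or_ge a 4 with ha4 | ha4
    · rcases Nat.lt_or_ge a 3 with ha3 | ha3
      · -- a = 2
        have ha : a = 2 := by omega
        subst ha
        have hempty : Finset.Icc 1 (2 - 2) = (∅ : Finset ℕ) := by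
          ext x; simp only [Finset.mem_Icc, Finset.notMem_empty, iff_false]; omega
        rw [hempty]
        apply sum_helper (σ := fun c => c + (c + 3) / 3)
        · intro x y hxy
          simp only at hxy
          rcases Nat.lt_trichotomy x y with h | h | h
          · have := Nat.div_le_div_right (c := 3) (by omega : x + 3 ≤ y + 3)
            omega
          · exact h
          · have := Nat.div_le_div_right (c := 3) (by omega : y + 3 ≤ x + 3)
            omega
        · intro c hc hne
          rcases Nat.lt_or_ge c 2 with hc2 | hc2
          · exact absurd (cnt_empty_eq_zero (by push_cast; omega)) hne
          · set t := (c + 3) / 3 with htdef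
            have hdm := Nat.div_add_mod (c + 3) 3
            have hmod : (c + 3) % 3 < 3 := Nat.mod_lt _ (by omega)
            have ht1 : 3 * t ≤ c + 3 := by omega
            have ht2 : c + 1 ≤ 3 * t := by omega
            have htc : t ≤ c + 1 := by omega
            have ht0 : 1 ≤ t := by omega
            set w := c + 1 - t with hwdef
            have hwt : t ≤ w := by omega
            have hwk : w ≤ t * k := by
              have h2k : t * 2 ≤ t * k := Nat.mul_le_mul_left t hk
              omega
            have hnn : ¬ (n - 1 - ((2:ℕ) : ℤ) * (c : ℤ) < 0) := fun hneg =>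
              hne (cnt_eq_zero hneg)
            constructor
            · simp only [Finset.mem_range] at hc ⊢
              push_cast at hnn
              omega
            · have step := add_mu_many (k := k) (P := ∅) (Finset.empty_subset _)
                t w hwt hwk (m - c) (n - 1 - ((2:ℕ) : ℤ) * c)
              refine le_trans step (le_of_eq (cnt_congr ?_ ?_))
              · omega
              · push_cast at hnn ⊢
                omega
      · -- a = 3
        have ha : a = 3 := by omega
        subst ha
        apply sum_helper (σ := fun c => (Equiv.swap 0 1) c)
        · exact fun x y hxy => (Equiv.swap 0 1).injective hxy
        · intro c hc hne
          simp only [Finset.mem_range] at hc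
          match c with
          | 0 =>
            rw [show (Equiv.swap (0:ℕ) 1) 0 = 1 from Equiv.swap_apply_left 0 1]
            refine ⟨by simp only [Finset.mem_range]; omega, ?_⟩
            have h32 : (3 - 2 : ℕ) = 1 := by norm_num
            rw [h32]
            refine le_of_eq ?_
            calc cnt k (Finset.Icc 1 1) (m - ((0:ℕ):ℤ)) (n - 1 - ((3:ℕ):ℤ) * ((0:ℕ):ℤ))
                = cnt k (Finset.Icc 1 1) m (n - 1) := cnt_congr (by omega) (by push_cast; ring)
              _ = cnt k (Finset.Icc 1 1) (m - 1) (n - 1 - 1) := shift1 hk (by omega)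
              _ = cnt k (Finset.Icc 1 1) (m - ((1:ℕ):ℤ)) (n - ((3 - 1:ℕ):ℤ) * ((1:ℕ):ℤ)) :=
                  cnt_congr (by omega) (by push_cast; ring)
          | 1 =>
            rw [show (Equiv.swap (0:ℕ) 1) 1 = 0 from Equiv.swap_apply_right 0 1]
            refine ⟨by simp only [Finset.mem_range]; omega, ?_⟩
            have h32 : (3 - 2 : ℕ) = 1 := by norm_num
            rw [h32]
            have hstep := add_step hk (P := Finset.Icc 1 1) (by simp)
              (Finset.Icc_subset_Icc le_rfl (by omega)) 3 (by omega) m (n - 3)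
            calc cnt k (Finset.Icc 1 1) (m - ((1:ℕ):ℤ)) (n - 1 - ((3:ℕ):ℤ) * ((1:ℕ):ℤ))
                = cnt k (Finset.Icc 1 1) (m - 1) (n - 3 - 1) := cnt_congr rfl (by push_cast; ring)
              _ = cnt k (Finset.Icc 1 1) m (n - 3) := (shift1 hk (by omega)).symm
              _ ≤ cnt k (Finset.Icc 1 1) m (n - 3 + ((3:ℕ):ℤ)) := hstep
              _ = cnt k (Finset.Icc 1 1) (m - ((0:ℕ):ℤ)) (n - ((3 - 1:ℕ):ℤ) * ((0:ℕ):ℤ)) :=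
                  cnt_congr (by omega) (by push_cast; ring)
          | (c + 2) =>
            rw [Equiv.swap_apply_of_ne_of_ne (by omega : (c+2:ℕ) ≠ 0) (by omega : (c+2:ℕ) ≠ 1)]
            refine ⟨Finset.mem_range.mpr hc, ?_⟩
            have h32 : (3 - 2 : ℕ) = 1 := by norm_num
            rw [h32]
            have hstep := add_step hk (P := Finset.Icc 1 1) (by simp)
              (Finset.Icc_subset_Icc le_rfl (by omega)) (c + 3) (by omega)
              (m - ((c + 2 : ℕ) : ℤ)) (n - 1 - ((3:ℕ):ℤ) * ((c + 2 : ℕ) : ℤ))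
            refine le_trans hstep (le_of_eq (cnt_congr rfl ?_))
            push_cast
            ring
    · -- a ≥ 4
      apply sum_helper (σ := fun c => c)
      · exact fun x y h => h
      · intro c hc hne
        refine ⟨hc, ?_⟩
        match c with
        | 0 =>
          have hih := ih (a - 2) (by omega) (by omega) (by omega) m n hm
          calc cnt k (Finset.Icc 1 (a-2)) (m - ((0:ℕ):ℤ)) (n - 1 - (a:ℤ) * ((0:ℕ):ℤ))
              = cnt k (Finset.Icc 1 (a-2)) m (n - 1) := cnt_congr (by omega) (by push_cast; ring)
            _ ≤ cnt k (Finset.Icc 1 (a-2)) m n := hih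
            _ = cnt k (Finset.Icc 1 (a-2)) (m - ((0:ℕ):ℤ)) (n - ((a - 1:ℕ):ℤ) * ((0:ℕ):ℤ)) :=
                cnt_congr (by omega) (by push_cast; ring)
        | (c + 1) =>
          have hstep := add_step hk (P := Finset.Icc 1 (a - 2))
            (Finset.mem_Icc.mpr ⟨le_rfl, by omega⟩) hsubI (c + 2) (by omega)
            (m - ((c + 1 : ℕ) : ℤ)) (n - 1 - (a:ℤ) * ((c + 1 : ℕ) : ℤ))
          refine le_trans hstep (le_of_eq (cnt_congr rfl ?_))
          have hca : ((a - 1 : ℕ) : ℤ) = (a : ℤ) - 1 := by omega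
          rw [hca]
          push_cast
          ring

def toM (k : ℕ) (f : Fin k → ℕ) : Multiset ℕ :=
  ∑ i : Fin k, Multiset.replicate (f i) ((i : ℕ) + 1)

lemma toM_sum {k : ℕ} (f : Fin k → ℕ) : (toM k f).sum = ∑ i : Fin k, ((i : ℕ) + 1) * f i := by
  rw [toM]
  induction (Finset.univ : Finset (Fin k)) using Finset.induction_on with
  | empty => simp
  | insert _ _ h ih =>
    rw [Finset.sum_insert h, Finset.sum_insert h, Multiset.sum_add, ih,
      Multiset.sum_replicate, smul_eq_mul]
    ring

lemma toM_card {k : ℕ} (f : Fin k → ℕ) :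
    (toM k f).card = ∑ i : Fin k, f i := by
  rw [toM]
  induction (Finset.univ : Finset (Fin k)) using Finset.induction_on with
  | empty => simp
  | insert _ _ h ih =>
    rw [Finset.sum_insert h, Finset.sum_insert h, Multiset.card_add, ih,
      Multiset.card_replicate]

lemma toM_count {k : ℕ} (f : Fin k → ℕ) (a : ℕ) :
    (toM k f).count a = ∑ i : Fin k, if a = (i : ℕ) + 1 then f i else 0 := by
  rw [toM, Multiset.count_sum']
  apply Finset.sum_congr rfl
  intro i _
  rw [Multiset.count_replicate]
  by_cases h : a = (i : ℕ) + 1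
  · rw [if_pos h.symm, if_pos h]
  · rw [if_neg (fun hh => h hh.symm), if_neg h]

lemma toM_mem {k : ℕ} (f : Fin k → ℕ) (x : ℕ) (hx : x ∈ toM k f) : x ∈ Finset.Icc 1 k := by
  rw [toM, Multiset.mem_sum] at hx
  obtain ⟨i, -, hi⟩ := hx
  have := Multiset.eq_of_mem_replicate hi
  subst this
  simp only [Finset.mem_Icc]
  omega

lemma toM_of_counts {k : ℕ} (s : Multiset ℕ) (h : ∀ x ∈ s, x ∈ Finset.Icc 1 k) :
    toM k (fun i => s.count ((i : ℕ) + 1)) = s := by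
  apply Multiset.ext.mpr
  intro a
  rw [toM_count]
  by_cases ha : a ∈ Finset.Icc 1 k
  · rw [Finset.mem_Icc] at ha
    have hlt : a - 1 < k := by omega
    rw [Finset.sum_eq_single (⟨a - 1, hlt⟩ : Fin k)]
    · simp only []
      rw [if_pos (by omega)]
      congr 1
      omega
    · intro b _ hb
      rw [if_neg]
      intro hab
      apply hb
      apply Fin.ext
      simp only []
      omega
    · intro hmem
      exact absurd (Finset.mem_univ _) hmem
  · have h0 : s.count a = 0 := by
      rw [Multiset.count_eq_zero]
      exact fun hs => ha (h a hs)
    rw [h0]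
    apply Finset.sum_eq_zero
    intro i _
    rw [if_neg]
    intro hai
    apply ha
    subst hai
    simp only [Finset.mem_Icc]
    omega

lemma count_le_of_mem_icc {k : ℕ} (s : Multiset ℕ) (h : ∀ x ∈ s, x ∈ Finset.Icc 1 k)
    (a : ℕ) (ha : 1 ≤ a) : s.count a ≤ s.sum := by
  have := count_mul_le_sum s a
  nlinarith

lemma sum_counts_eq {k : ℕ} (s : Multiset ℕ) (h : ∀ x ∈ s, x ∈ Finset.Icc 1 k) :
    ∑ i : Fin k, ((i : ℕ) + 1) * s.count ((i : ℕ) + 1) = s.sum := by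
  conv_rhs => rw [← toM_of_counts s h]
  rw [toM_sum]

lemma card_counts_eq {k : ℕ} (s : Multiset ℕ) (h : ∀ x ∈ s, x ∈ Finset.Icc 1 k) :
    ∑ i : Fin k, s.count ((i : ℕ) + 1) = s.card := by
  conv_rhs => rw [← toM_of_counts s h]
  rw [toM_card]

lemma toM_count_at {k : ℕ} (f : Fin k → ℕ) (i : Fin k) :
    (toM k f).count ((i : ℕ) + 1) = f i := by
  rw [toM_count, Finset.sum_eq_single i]
  · rw [if_pos rfl]
  · intro b _ hb
    rw [if_neg]
    intro hab
    exact hb (Fin.ext (by omega))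
  · intro hmem
    exact absurd (Finset.mem_univ _) hmem

lemma akm_eq_cnt (k : ℕ) (m : ℤ) (n : ℕ) : akm k m n = cnt k (Finset.Icc 1 k) m (n : ℤ) := by
  rw [akm, cnt]
  apply Finset.card_nbij'
    (i := fun p : (Fin k → Fin (n + 1)) × (Fin k → Fin (n + 1)) =>
      (toM k (fun i => (p.1 i : ℕ)), toM k (fun i => (p.2 i : ℕ))))
    (j := fun s : Multiset ℕ × Multiset ℕ => ((fun i => (⟨min (s.1.count ((i : ℕ) + 1)) n,
                      Nat.lt_succ_of_le (min_le_right _ _)⟩ : Fin (n + 1))),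
                    (fun i => (⟨min (s.2.count ((i : ℕ) + 1)) n,
                      Nat.lt_succ_of_le (min_le_right _ _)⟩ : Fin (n + 1)))))
  · intro p hp
    rw [Finset.mem_coe, Finset.mem_filter] at hp
    obtain ⟨-, hw, hd⟩ := hp
    rw [Finset.mem_coe, mem_cset (Finset.Subset.refl _)]
    refine ⟨fun x hx => toM_mem _ x hx, fun x hx => toM_mem _ x hx, ?_, ?_⟩
    · rw [toM_sum, toM_sum]
      have : ∑ i : Fin k, ((i : ℕ) + 1) * ((p.1 i : ℕ)) + ∑ i : Fin k, ((i : ℕ) + 1) * ((p.2 i : ℕ))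
          = ∑ i : Fin k, ((i : ℕ) + 1) * ((p.1 i : ℕ) + (p.2 i : ℕ)) := by
        rw [← Finset.sum_add_distrib]
        apply Finset.sum_congr rfl
        intro i _
        ring
      rw [this, hw]
    · rw [toM_card, toM_card]
      push_cast
      push_cast at hd
      omega
  · intro s hs
    rw [Finset.mem_coe, mem_cset (Finset.Subset.refl _)] at hs
    obtain ⟨h1, h2, h3, h4⟩ := hs
    have hsum : s.1.sum + s.2.sum = n := by exact_mod_cast h3
    have hle1 : ∀ i : Fin k, s.1.count ((i : ℕ) + 1) ≤ n := fun i =>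
      le_trans (count_le_of_mem_icc s.1 h1 _ (by omega)) (by omega)
    have hle2 : ∀ i : Fin k, s.2.count ((i : ℕ) + 1) ≤ n := fun i =>
      le_trans (count_le_of_mem_icc s.2 h2 _ (by omega)) (by omega)
    rw [Finset.mem_coe, Finset.mem_filter]
    refine ⟨Finset.mem_univ _, ?_, ?_⟩
    · simp only [min_eq_left (hle1 _), min_eq_left (hle2 _)]
      have : ∑ i : Fin k, ((i : ℕ) + 1) * (s.1.count ((i : ℕ) + 1) + s.2.count ((i : ℕ) + 1))
          = ∑ i : Fin k, ((i : ℕ) + 1) * s.1.count ((i : ℕ) + 1)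
            + ∑ i : Fin k, ((i : ℕ) + 1) * s.2.count ((i : ℕ) + 1) := by
        rw [← Finset.sum_add_distrib]
        apply Finset.sum_congr rfl
        intro i _
        ring
      rw [this, sum_counts_eq s.1 h1, sum_counts_eq s.2 h2, hsum]
    · simp only [min_eq_left (hle1 _), min_eq_left (hle2 _)]
      have e1 : ∑ i : Fin k, ((s.1.count ((i : ℕ) + 1) : ℤ)) = (s.1.card : ℤ) := by
        rw [← card_counts_eq s.1 h1]
        push_cast
        rfl
      have e2 : ∑ i : Fin k, ((s.2.count ((i : ℕ) + 1) : ℤ)) = (s.2.card : ℤ) := by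
        rw [← card_counts_eq s.2 h2]
        push_cast
        rfl
      rw [e1, e2, h4]
  · intro p hp
    have hinv : ∀ (f : Fin k → Fin (n + 1)) (i : Fin k),
        min ((toM k (fun j => (f j : ℕ))).count ((i : ℕ) + 1)) n = (f i : ℕ) := by
      intro f i
      rw [toM_count_at]
      exact min_eq_left (by omega)
    refine Prod.ext_iff.mpr ⟨funext fun i => Fin.ext ?_, funext fun i => Fin.ext ?_⟩
    · exact hinv p.1 i
    · exact hinv p.2 i
  · intro s hs
    rw [Finset.mem_coe, mem_cset (Finset.Subset.refl _)] at hs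
    obtain ⟨h1, h2, h3, h4⟩ := hs
    have hsum : s.1.sum + s.2.sum = n := by exact_mod_cast h3
    have hle1 : ∀ i : Fin k, s.1.count ((i : ℕ) + 1) ≤ n := fun i =>
      le_trans (count_le_of_mem_icc s.1 h1 _ (by omega)) (by omega)
    have hle2 : ∀ i : Fin k, s.2.count ((i : ℕ) + 1) ≤ n := fun i =>
      le_trans (count_le_of_mem_icc s.2 h2 _ (by omega)) (by omega)
    refine Prod.ext_iff.mpr ⟨?_, ?_⟩
    · show toM k (fun i => min (s.1.count ((i : ℕ) + 1)) n) = s.1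
      have : (fun i : Fin k => min (s.1.count ((i : ℕ) + 1)) n)
          = (fun i : Fin k => s.1.count ((i : ℕ) + 1)) := funext fun i => min_eq_left (hle1 i)
      rw [this]
      exact toM_of_counts s.1 h1
    · show toM k (fun i => min (s.2.count ((i : ℕ) + 1)) n) = s.2
      have : (fun i : Fin k => min (s.2.count ((i : ℕ) + 1)) n)
          = (fun i : Fin k => s.2.count ((i : ℕ) + 1)) := funext fun i => min_eq_left (hle2 i)
      rw [this]
      exact toM_of_counts s.2 h2

lemma akm_neg (k : ℕ) (m : ℤ) (n : ℕ) : akm k m n = akm k (-m) n := by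
  rw [akm, akm]
  apply Finset.card_nbij' (i := fun p => Prod.swap p) (j := fun p => Prod.swap p)
  · intro p hp
    rw [Finset.mem_coe, Finset.mem_filter] at hp ⊢
    obtain ⟨-, hw, hd⟩ := hp
    simp only [Prod.fst_swap, Prod.snd_swap]
    refine ⟨Finset.mem_univ _, ?_, by omega⟩
    calc ∑ x : Fin k, ((x : ℕ) + 1) * ((p.2 x : ℕ) + (p.1 x : ℕ))
        = ∑ x : Fin k, ((x : ℕ) + 1) * ((p.1 x : ℕ) + (p.2 x : ℕ)) :=
          Finset.sum_congr rfl (fun i _ => by ring)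
      _ = n := hw
  · intro p hp
    rw [Finset.mem_coe, Finset.mem_filter] at hp ⊢
    obtain ⟨-, hw, hd⟩ := hp
    simp only [Prod.fst_swap, Prod.snd_swap]
    refine ⟨Finset.mem_univ _, ?_, by omega⟩
    calc ∑ x : Fin k, ((x : ℕ) + 1) * ((p.2 x : ℕ) + (p.1 x : ℕ))
        = ∑ x : Fin k, ((x : ℕ) + 1) * ((p.1 x : ℕ) + (p.2 x : ℕ)) :=
          Finset.sum_congr rfl (fun i _ => by ring)
      _ = n := hw
  · intro p _
    rfl
  · intro p _
    rfl

lemma akm_mono (k : ℕ) (hk : 2 ≤ k) (m : ℤ) (hm : 2 ≤ m.natAbs) (n : ℕ) (hn : 1 ≤ n) :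
    akm k m (n - 1) ≤ akm k m n := by
  have main : ∀ m' : ℤ, 2 ≤ m' → akm k m' (n - 1) ≤ akm k m' n := by
    intro m' hm'
    rw [akm_eq_cnt, akm_eq_cnt]
    have hcast : ((n - 1 : ℕ) : ℤ) = (n : ℤ) - 1 := by omega
    rw [hcast]
    exact key hk k hk le_rfl m' n hm'
  rcases le_or_gt 2 m with h | h
  · exact main m h
  · have hm2 : 2 ≤ -m := by omega
    rw [akm_neg k m (n - 1), akm_neg k m n]
    exact main (-m) hm2


/-- For `k ≥ 2` and `|m| ≥ 2`, all coefficients of `f_{m,k}(q)` are nonnegative. -/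
theorem fmk_nonneg (k : ℕ) (hk : 2 ≤ k) (m : ℤ) (hm : 2 ≤ m.natAbs) (n : ℕ) :
    0 ≤ fmk k m n := by
  rw [fmk]
  by_cases hn : n = 0
  · rw [if_pos hn, sub_zero]
    exact Int.natCast_nonneg _
  · rw [if_neg hn]
    have := akm_mono k hk m hm n (by omega)
    omega
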